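/- Assume 0 ≤ λ < λ̃. Then: (i) b̃* < b*; (ii) the function B(s) := (r+λ)·(b̃*/s)^{θ̃} − (r+λ̃)·(b*/s)^{θ} + (λ̃ − λ) is strictly increasing on [b*, ∞); (iii) B(b*) < 0 and B(s) → λ̃ − λ > 0 as s → ∞; and hence (iv) there exists a unique s* ∈ (b*, ∞) with B(s*) = 0, so that the thresholds are ordered b̃* < b* < s*. -/

import Mathlib

open Real Filter

/-- `θ = 2(r+λ)/σ²`. -/
noncomputable def perpTheta (r lam sigma : ℝ) : ℝ := 2 * (r + lam) / sigma ^ 2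

/-- Optimal exercise threshold `b* = 2rK/(2(r+λ) + σ²)`. -/
noncomputable def perpBstar (r lam sigma K : ℝ) : ℝ := 2 * r * K / (2 * (r + lam) + sigma ^ 2)

/-- The function `B(s) = (r+λ)·(b̃*/s)^{θ̃} − (r+λ̃)·(b*/s)^{θ} + (λ̃ − λ)` whose
root determines the buyer's optimal purchase threshold `s*`. -/
noncomputable def purchaseB (r lam lamt sigma K s : ℝ) : ℝ :=
  (r + lam) * (perpBstar r lamt sigma K / s) ^ perpTheta r lamt sigma
    - (r + lamt) * (perpBstar r lam sigma K / s) ^ perpTheta r lam sigma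
    + (lamt - lam)

lemma aux_hasDerivAt_pow_div (a p x : ℝ) (ha : 0 < a) (hx : 0 < x) :
    HasDerivAt (fun s : ℝ => (a / s) ^ p) (-(p * (a / x) ^ p) / x) x := by
  have h1 : HasDerivAt (fun s : ℝ => a / s) (-(a / x ^ 2)) x := by
    simpa [div_eq_mul_inv, neg_div, mul_comm] using
      (hasDerivAt_inv (ne_of_gt hx)).const_mul a
  have hax : (0:ℝ) < a / x := by positivity
  have h2 := h1.rpow_const (p := p) (Or.inl (ne_of_gt hax))
  convert h2 using 1
  rw [Real.rpow_sub_one (ne_of_gt hax)]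
  field_simp

lemma aux_tendsto_pow_div (a p : ℝ) (hp : 0 < p) :
    Tendsto (fun s : ℝ => (a / s) ^ p) atTop (nhds 0) := by
  have h1 : Tendsto (fun s : ℝ => a / s) atTop (nhds 0) :=
    Tendsto.div_atTop tendsto_const_nhds tendsto_id
  have h2 : ContinuousAt (fun y : ℝ => y ^ p) 0 :=
    Real.continuousAt_rpow_const 0 p (Or.inr hp.le)
  have := h2.tendsto.comp h1
  simpa [Real.zero_rpow (ne_of_gt hp), Function.comp_def] using this

/-- **Existence, uniqueness and ordering of the purchase threshold
(Proposition 3.7).**  Assume `0 ≤ λ < λ̃`.  Then: (i) `b̃* < b*`; (ii) `B` is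
strictly increasing on `[b*, ∞)`; (iii) `B(b*) < 0` and `B(s) → λ̃ − λ > 0` as
`s → ∞`; hence (iv) there is a unique `s* ∈ (b*, ∞)` with `B(s*) = 0`, so that
the thresholds are ordered `b̃* < b* < s*`. -/
theorem purchaseB_unique_root
    (r lam lamt sigma K : ℝ) (hr : 0 < r) (hsigma : 0 < sigma) (hK : 0 < K)
    (hlam : 0 ≤ lam) (hlt : lam < lamt) :
    perpBstar r lamt sigma K < perpBstar r lam sigma K
    ∧ StrictMonoOn (fun s => purchaseB r lam lamt sigma K s)
        (Set.Ici (perpBstar r lam sigma K))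
    ∧ purchaseB r lam lamt sigma K (perpBstar r lam sigma K) < 0
    ∧ Tendsto (fun s => purchaseB r lam lamt sigma K s) atTop (nhds (lamt - lam))
    ∧ 0 < lamt - lam
    ∧ ∃! s : ℝ, s ∈ Set.Ioi (perpBstar r lam sigma K)
        ∧ purchaseB r lam lamt sigma K s = 0 := by
  have hσ2 : (0:ℝ) < sigma ^ 2 := by positivity
  have hrl : 0 < r + lam := by linarith
  have hrlt : 0 < r + lamt := by linarith
  have hθ : 0 < perpTheta r lam sigma := by unfold perpTheta; positivity
  have hθt : 0 < perpTheta r lamt sigma := div_pos (by linarith) hσ2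
  have hθθ : perpTheta r lam sigma < perpTheta r lamt sigma := by
    unfold perpTheta; exact div_lt_div_of_pos_right (by linarith) hσ2
  set θ := perpTheta r lam sigma
  set θt := perpTheta r lamt sigma
  have hd1 : (0:ℝ) < 2 * (r + lam) + sigma ^ 2 := by linarith
  have hd2 : (0:ℝ) < 2 * (r + lamt) + sigma ^ 2 := by linarith
  have hb : 0 < perpBstar r lam sigma K := by unfold perpBstar; positivity
  have hbt : 0 < perpBstar r lamt sigma K := div_pos (by positivity) hd2
  have hbtb : perpBstar r lamt sigma K < perpBstar r lam sigma K := by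
    unfold perpBstar
    exact div_lt_div_of_pos_left (by positivity) hd1 (by linarith)
  set b := perpBstar r lam sigma K
  set bt := perpBstar r lamt sigma K
  -- key identity
  have hc : θ * (r + lamt) = θt * (r + lam) := by
    show 2 * (r + lam) / sigma ^ 2 * (r + lamt) = 2 * (r + lamt) / sigma ^ 2 * (r + lam)
    field_simp
  -- derivative of B
  have hBd : ∀ x : ℝ, 0 < x →
      HasDerivAt (fun s => purchaseB r lam lamt sigma K s)
        ((r + lam) * (-(θt * (bt / x) ^ θt) / x)
          - (r + lamt) * (-(θ * (b / x) ^ θ) / x)) x := by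
    intro x hx
    have h1 := (aux_hasDerivAt_pow_div bt θt x hbt hx).const_mul (r + lam)
    have h2 := (aux_hasDerivAt_pow_div b θ x hb hx).const_mul (r + lamt)
    have := (h1.sub h2).add_const (lamt - lam)
    exact this
  -- derivative positive on Ioi b
  have hDpos : ∀ x : ℝ, b < x →
      0 < (r + lam) * (-(θt * (bt / x) ^ θt) / x)
          - (r + lamt) * (-(θ * (b / x) ^ θ) / x) := by
    intro x hx
    have hx0 : 0 < x := hb.trans hx
    have key : (bt / x) ^ θt < (b / x) ^ θ := by
      calc (bt / x) ^ θt < (b / x) ^ θt := by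
            apply Real.rpow_lt_rpow (by positivity) _ hθt
            exact div_lt_div_of_pos_right hbtb hx0
        _ ≤ (b / x) ^ θ := by
            apply Real.rpow_le_rpow_of_exponent_ge (by positivity) _ hθθ.le
            exact le_of_lt ((div_lt_one hx0).mpr hx)
    have heq : (r + lam) * (-(θt * (bt / x) ^ θt) / x)
          - (r + lamt) * (-(θ * (b / x) ^ θ) / x)
        = θt * (r + lam) * ((b / x) ^ θ - (bt / x) ^ θt) / x := by
      field_simp
      linear_combination ((b / x) ^ θ) * hc
    rw [heq]
    have : 0 < (b / x) ^ θ - (bt / x) ^ θt := sub_pos.mpr key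
    positivity
  -- continuity
  have hcont : ContinuousOn (fun s => purchaseB r lam lamt sigma K s) (Set.Ici b) :=
    fun x hx => ((hBd x (lt_of_lt_of_le hb hx)).continuousAt).continuousWithinAt
  -- strict monotonicity
  have hmono : StrictMonoOn (fun s => purchaseB r lam lamt sigma K s) (Set.Ici b) := by
    apply strictMonoOn_of_deriv_pos (convex_Ici b) hcont
    intro x hx
    rw [interior_Ici] at hx
    rw [(hBd x (hb.trans hx)).deriv]
    exact hDpos x hx
  -- B(b) < 0
  have hBb : purchaseB r lam lamt sigma K b < 0 := by
    have h1 : (bt / b) ^ θt < 1 :=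
      Real.rpow_lt_one (by positivity) ((div_lt_one hb).mpr hbtb) hθt
    have h2 : (r + lam) * (bt / b) ^ θt < (r + lam) * 1 :=
      mul_lt_mul_of_pos_left h1 hrl
    show (r + lam) * (bt / b) ^ θt - (r + lamt) * (b / b) ^ θ + (lamt - lam) < 0
    rw [div_self (ne_of_gt hb), Real.one_rpow]
    nlinarith
  -- limit
  have hT : Tendsto (fun s => purchaseB r lam lamt sigma K s) atTop (nhds (lamt - lam)) := by
    have h1 := (aux_tendsto_pow_div bt θt hθt).const_mul (r + lam)
    have h2 := (aux_tendsto_pow_div b θ hθ).const_mul (r + lamt)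
    have := (h1.sub h2).add_const (lamt - lam)
    have e : (r + lam) * 0 - (r + lamt) * 0 + (lamt - lam) = lamt - lam := by ring
    rw [e] at this
    exact this
  refine ⟨hbtb, hmono, hBb, hT, by linarith, ?_⟩
  -- existence
  have hev : ∀ᶠ s in atTop, 0 < purchaseB r lam lamt sigma K s :=
    hT.eventually (eventually_gt_nhds (by linarith))
  obtain ⟨s2, hs2pos, hs2b⟩ := (hev.and (eventually_gt_atTop b)).exists
  have hivt := intermediate_value_Icc hs2b.le (hcont.mono (Set.Icc_subset_Ici_self))
  have h0mem : (0:ℝ) ∈ Set.Icc (purchaseB r lam lamt sigma K b)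
      (purchaseB r lam lamt sigma K s2) := ⟨hBb.le, hs2pos.le⟩
  obtain ⟨x, hxmem, hfx⟩ := hivt h0mem
  simp only [] at hfx
  have hbx : b < x := by
    rcases lt_or_eq_of_le hxmem.1 with h | h
    · exact h
    · exfalso; rw [← h] at hfx; rw [hfx] at hBb; linarith
  refine ⟨x, ⟨hbx, hfx⟩, ?_⟩
  rintro y ⟨hy, hfy⟩
  exact hmono.injOn (Set.mem_Ici.mpr (le_of_lt hy)) (Set.mem_Ici.mpr hbx.le)
    (by rw [hfy, hfx])
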